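/- Let φ_1, …, φ_n : ℝ → ℝ be differentiable convex functions and Φ(u) = Σ_i φ_i(u_i). A point û with û₁ ≤ ⋯ ≤ û_n minimizes Φ over the cone {u₁ ≤ ⋯ ≤ u_n} if and only if the Fenchel conditions hold: for every i ∈ {1,…,n}, Σ_{j=i}^n φ_j'(û_j) ≥ 0, with equality for i = 1, and equality for every i such that û_{i−1} < û_i. -/

import Mathlib

open Filter Set Finset

-- gradient inequality
lemma grad_ineq {f : ℝ → ℝ} (hf : ConvexOn ℝ Set.univ f) {x c : ℝ}
    (hd : HasDerivAt f c x) (y : ℝ) : f x + c * (y - x) ≤ f y := by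
  rcases lt_trichotomy x y with h | h | h
  · have := hf.le_slope_of_hasDerivAt (mem_univ x) (mem_univ y) h hd
    rw [slope_def_field] at this
    have hy : 0 < y - x := by linarith
    rw [le_div_iff₀ hy] at this
    linarith
  · simp [h]
  · have := hf.slope_le_of_hasDerivAt (mem_univ y) (mem_univ x) h hd
    rw [slope_def_field] at this
    have hy : 0 < x - y := by linarith
    rw [div_le_iff₀ hy] at this
    linarith

-- right derivative nonneg
lemma right_min_deriv_nonneg {g : ℝ → ℝ} {c ε : ℝ} (hε : 0 < ε)
    (hd : HasDerivAt g c 0) (h : ∀ t ∈ Set.Ioo (0:ℝ) ε, g 0 ≤ g t) : 0 ≤ c := by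
  have hs := hasDerivAt_iff_tendsto_slope.mp hd
  have h2 : Tendsto (slope g 0) (nhdsWithin 0 (Set.Ioi 0)) (nhds c) :=
    hs.mono_left (nhdsWithin_mono _ (fun x hx => ne_of_gt hx))
  refine ge_of_tendsto h2 ?_
  filter_upwards [Ioo_mem_nhdsGT_of_mem ⟨le_refl (0:ℝ), hε⟩] with t ht
  rw [slope_def_field]
  have := h t ht
  have ht0 : (0:ℝ) < t - 0 := by simpa using ht.1
  exact div_nonneg (by linarith) ht0.le
open Finset

lemma abel_sum (f w : ℕ → ℝ) (n : ℕ) :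
    ∑ i ∈ Finset.Icc 1 n, f i * w i
      = (∑ j ∈ Finset.Icc 1 n, f j) * w 1
        + ∑ i ∈ Finset.Icc 2 n, (∑ j ∈ Finset.Icc i n, f j) * (w i - w (i-1)) := by
  rcases Nat.eq_zero_or_pos n with rfl | hn
  · simp
  set lam : ℕ → ℝ := fun i => ∑ j ∈ Finset.Icc i n, f j with hlam
  have hstep : ∀ i ∈ Finset.Icc 1 n, f i = lam i - lam (i+1) := by
    intro i hi
    rw [Finset.mem_Icc] at hi
    simp only [hlam]
    rw [Finset.Icc_eq_cons_Ioc hi.2, Finset.sum_cons, Finset.Icc_add_one_left_eq_Ioc]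
    ring
  calc ∑ i ∈ Finset.Icc 1 n, f i * w i
      = ∑ i ∈ Finset.Icc 1 n, (lam i * w i - lam (i+1) * w i) := by
        refine Finset.sum_congr rfl fun i hi => ?_
        rw [hstep i hi]; ring
    _ = ∑ i ∈ Finset.Icc 1 n, lam i * w i - ∑ i ∈ Finset.Icc 1 n, lam (i+1) * w i :=
        Finset.sum_sub_distrib _ _
    _ = (lam 1 * w 1 + ∑ i ∈ Finset.Icc 2 n, lam i * w i)
        - (∑ i ∈ Finset.Icc 2 n, lam i * w (i-1)) := by
        congr 1
        · rw [Finset.Icc_eq_cons_Ioc hn, Finset.sum_cons, ← Finset.Icc_add_one_left_eq_Ioc]; rfl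
        · -- reindex
          have : ∑ i ∈ Finset.Icc 1 n, lam (i+1) * w i
              = ∑ i ∈ Finset.Icc 2 (n+1), lam i * w (i-1) := by
            rw [show (2:ℕ) = 1 + 1 from rfl, show n + 1 = n + 1 from rfl,
              ← Finset.map_add_right_Icc 1 n 1, Finset.sum_map]
            simp
          rw [this, Finset.sum_Icc_succ_top (by omega : 2 ≤ n+1)]
          have : lam (n+1) = 0 := by
            simp [hlam, Finset.Icc_eq_empty_of_lt (by omega : n < n + 1)]
          simp [this]
    _ = lam 1 * w 1 + ∑ i ∈ Finset.Icc 2 n, lam i * (w i - w (i-1)) := by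
        rw [add_sub_assoc, ← Finset.sum_sub_distrib]
        congr 1
        refine Finset.sum_congr rfl fun i hi => ?_
        ring

lemma dir_deriv (n : ℕ) (φ φ' : ℕ → ℝ → ℝ)
    (hderiv : ∀ i ∈ Finset.Icc 1 n, ∀ x : ℝ, HasDerivAt (φ i) (φ' i x) x)
    (uhat d : ℕ → ℝ) :
    HasDerivAt (fun t : ℝ => ∑ i ∈ Finset.Icc 1 n, φ i (uhat i + t * d i))
      (∑ i ∈ Finset.Icc 1 n, φ' i (uhat i) * d i) 0 := by
  apply HasDerivAt.fun_sum
  intro i hi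
  have h1 : HasDerivAt (fun t : ℝ => uhat i + t * d i) (d i) 0 := by
    simpa using ((hasDerivAt_id (0:ℝ)).mul_const (d i)).const_add (uhat i)
  have := (hderiv i hi (uhat i + 0 * d i)).comp 0 h1
  simpa [Function.comp_def] using this


theorem fenchel_conditions_isotonic (n : ℕ) (φ φ' : ℕ → ℝ → ℝ)
    (hconv : ∀ i ∈ Finset.Icc 1 n, ConvexOn ℝ Set.univ (φ i))
    (hderiv : ∀ i ∈ Finset.Icc 1 n, ∀ x : ℝ, HasDerivAt (φ i) (φ' i x) x)
    (uhat : ℕ → ℝ)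
    (hmono : ∀ i j, i ∈ Finset.Icc 1 n → j ∈ Finset.Icc 1 n → i ≤ j → uhat i ≤ uhat j) :
    IsMinOn (fun u : ℕ → ℝ => ∑ i ∈ Finset.Icc 1 n, φ i (u i))
        {u : ℕ → ℝ | ∀ i j, i ∈ Finset.Icc 1 n → j ∈ Finset.Icc 1 n → i ≤ j → u i ≤ u j} uhat
      ↔ ((∀ i ∈ Finset.Icc 1 n, 0 ≤ ∑ j ∈ Finset.Icc i n, φ' j (uhat j)) ∧
          (∑ j ∈ Finset.Icc 1 n, φ' j (uhat j) = 0) ∧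
          (∀ i ∈ Finset.Icc 2 n, uhat (i - 1) < uhat i →
            ∑ j ∈ Finset.Icc i n, φ' j (uhat j) = 0)) := by
  constructor
  · intro hmin
    rw [isMinOn_iff] at hmin
    -- key directional lemma
    have key : ∀ d : ℕ → ℝ, ∀ ε : ℝ, 0 < ε →
        (∀ t ∈ Set.Ioo (0:ℝ) ε, ∀ i j, i ∈ Finset.Icc 1 n → j ∈ Finset.Icc 1 n → i ≤ j →
          uhat i + t * d i ≤ uhat j + t * d j) →
        0 ≤ ∑ i ∈ Finset.Icc 1 n, φ' i (uhat i) * d i := by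
      intro d ε hε hfeas
      apply right_min_deriv_nonneg hε (dir_deriv n φ φ' hderiv uhat d)
      intro t ht
      have := hmin (fun j => uhat j + t * d j) (hfeas t ht)
      simpa using this
    have hfil : ∀ i : ℕ, 1 ≤ i → ∀ c : ℝ,
        ∑ j ∈ Finset.Icc 1 n, φ' j (uhat j) * (if i ≤ j then c else 0)
          = c * ∑ j ∈ Finset.Icc i n, φ' j (uhat j) := by
      intro i hi c
      rw [Finset.mul_sum,
        show Finset.Icc i n = (Finset.Icc 1 n).filter (fun j => i ≤ j) by
          ext j; simp only [Finset.mem_Icc, Finset.mem_filter]; omega,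
        Finset.sum_filter]
      exact Finset.sum_congr rfl fun j _ => by split <;> ring
    have hA : ∀ i ∈ Finset.Icc 1 n, 0 ≤ ∑ j ∈ Finset.Icc i n, φ' j (uhat j) := by
      intro i hi
      have h := key (fun j => if i ≤ j then 1 else 0) 1 one_pos ?_
      · rwa [hfil i (Finset.mem_Icc.mp hi).1 1, one_mul] at h
      · intro t ht a b ha hb hab
        have h1 : uhat a ≤ uhat b := hmono a b ha hb hab
        by_cases hia : i ≤ a
        · simp only [if_pos hia, if_pos (le_trans hia hab)]; linarith
        · simp only [if_neg hia]
          split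
          · nlinarith [ht.1]
          · linarith
    have hB : ∑ j ∈ Finset.Icc 1 n, φ' j (uhat j) = 0 := by
      have hpos : 0 ≤ ∑ j ∈ Finset.Icc 1 n, φ' j (uhat j) := by
        have h := key (fun _ => 1) 1 one_pos ?_
        · simpa using h
        · intro t ht a b ha hb hab
          have := hmono a b ha hb hab
          linarith
      have hneg : 0 ≤ -∑ j ∈ Finset.Icc 1 n, φ' j (uhat j) := by
        have h := key (fun _ => -1) 1 one_pos ?_
        · rw [← Finset.sum_neg_distrib]
          convert h using 2 with j
          ring
        · intro t ht a b ha hb hab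
          have := hmono a b ha hb hab
          linarith
      linarith
    refine ⟨hA, hB, ?_⟩
    intro i hi hlt
    rw [Finset.mem_Icc] at hi
    have him : i ∈ Finset.Icc 1 n := by rw [Finset.mem_Icc]; omega
    have him1 : i - 1 ∈ Finset.Icc 1 n := by rw [Finset.mem_Icc]; omega
    have hub := hA i him
    have h := key (fun j => if i ≤ j then -1 else 0) (uhat i - uhat (i-1)) (by linarith) ?_
    · rw [hfil i (by omega) (-1)] at h
      linarith
    · intro t ht a b ha hb hab
      have h1 : uhat a ≤ uhat b := hmono a b ha hb hab
      by_cases hia : i ≤ a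
      · simp only [if_pos hia, if_pos (le_trans hia hab)]; linarith
      · simp only [if_neg hia]
        by_cases hib : i ≤ b
        · simp only [if_pos hib]
          have h2 : uhat a ≤ uhat (i-1) := hmono a (i-1) ha him1 (by omega)
          have h3 : uhat i ≤ uhat b := hmono i b him hb hib
          have := ht.2
          nlinarith [ht.1]
        · simp only [if_neg hib]; linarith
  · rintro ⟨h1, h2, h3⟩
    rw [isMinOn_iff]
    intro v hv
    simp only [Set.mem_setOf_eq] at hv
    have grad : ∀ i ∈ Finset.Icc 1 n,
        φ i (uhat i) + φ' i (uhat i) * (v i - uhat i) ≤ φ i (v i) :=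
      fun i hi => grad_ineq (hconv i hi) (hderiv i hi (uhat i)) (v i)
    have hsum := Finset.sum_le_sum grad
    rw [Finset.sum_add_distrib] at hsum
    have hkey : 0 ≤ ∑ i ∈ Finset.Icc 1 n, φ' i (uhat i) * (v i - uhat i) := by
      rw [abel_sum (fun i => φ' i (uhat i)) (fun i => v i - uhat i) n, h2, zero_mul, zero_add]
      apply Finset.sum_nonneg
      intro i hi
      have hi' := hi
      rw [Finset.mem_Icc] at hi'
      have him : i ∈ Finset.Icc 1 n := by rw [Finset.mem_Icc]; omega
      have him1 : i - 1 ∈ Finset.Icc 1 n := by rw [Finset.mem_Icc]; omega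
      by_cases hlt : uhat (i-1) < uhat i
      · rw [h3 i hi hlt, zero_mul]
      · have heq : uhat i ≤ uhat (i-1) := not_lt.mp hlt
        have heq2 : uhat (i-1) ≤ uhat i := hmono (i-1) i him1 him (by omega)
        have hvm : v (i-1) ≤ v i := hv (i-1) i him1 him (by omega)
        have := h1 i him
        nlinarith
    linarith
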